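/- Let S be a finite symmetric generating set of a group G, and let N be a finite normal subgroup of G such that the quotient group G/N is bi-orderable. Then every automorphism φ of Cay(G;S) induces a well-defined automorphism of Cay(G/N; S̄), where S̄ is the image of S in G/N: that is, φ(gN) ⊆ φ(g)N for all g ∈ G, and the induced map gN ↦ φ(g)N is a graph automorphism of Cay(G/N; S̄). -/

import Mathlib

open Pointwise

/-- The Cayley graph of a group `G` with respect to a symmetric set `S`
not containing the identity: `g` is adjacent to `h` iff `g⁻¹ * h ∈ S`. -/
def cayleyGraph {G : Type*} [Group G] (S : Set G)
    (hsymm : ∀ s ∈ S, s⁻¹ ∈ S) (hid : (1 : G) ∉ S) : SimpleGraph G where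
  Adj g h := g⁻¹ * h ∈ S
  symm := by
    constructor
    intro g h hgh
    have h2 := hsymm _ hgh
    simpa [mul_inv_rev] using h2
  loopless := by
    constructor
    intro g hg
    simp only [inv_mul_cancel] at hg
    exact hid hg

namespace CayleyDescendAux


variable {G : Type*} [Group G]

/-- Ball of radius `c` around the identity for the word metric w.r.t. `S`. -/
def ball (S : Set G) : ℕ → Set G
  | 0 => {1}
  | c + 1 => ball S c ∪ ball S c * S

lemma one_mem_ball (S : Set G) (c : ℕ) : (1 : G) ∈ ball S c := by
  induction c with
  | zero => exact Set.mem_singleton 1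
  | succ c ih => exact Or.inl ih

lemma ball_subset_succ (S : Set G) (c : ℕ) : ball S c ⊆ ball S (c + 1) :=
  fun _ hx => Or.inl hx

lemma ball_mono (S : Set G) {c d : ℕ} (h : c ≤ d) : ball S c ⊆ ball S d := by
  induction d with
  | zero => rw [Nat.le_zero.mp h]
  | succ d ih =>
    rcases Nat.lt_or_ge c (d + 1) with h' | h'
    · exact (ih (Nat.lt_succ_iff.mp h')).trans (ball_subset_succ S d)
    · rw [Nat.le_antisymm h h']

lemma ball_finite {S : Set G} (hfin : S.Finite) (c : ℕ) : (ball S c).Finite := by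
  induction c with
  | zero => exact Set.finite_singleton 1
  | succ c ih => exact ih.union (ih.mul hfin)

lemma mul_mem_ball {S : Set G} {x y : G} {c d : ℕ}
    (hx : x ∈ ball S c) (hy : y ∈ ball S d) : x * y ∈ ball S (c + d) := by
  induction d generalizing y with
  | zero =>
    have : y = 1 := hy
    subst this; simpa using hx
  | succ d ih =>
    rcases hy with hy | hy
    · exact ball_subset_succ S (c + d) (ih hy)
    · obtain ⟨b, hb, s, hs, rfl⟩ := hy
      exact Or.inr ⟨x * b, ih hb, s, hs, mul_assoc x b s⟩

lemma mem_ball_one {S : Set G} {s : G} (hs : s ∈ S) : s ∈ ball S 1 :=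
  Or.inr ⟨1, Set.mem_singleton 1, s, hs, one_mul s⟩

lemma inv_mem_ball {S : Set G} (hsymm : ∀ s ∈ S, s⁻¹ ∈ S) {c : ℕ} :
    ∀ {x : G}, x ∈ ball S c → x⁻¹ ∈ ball S c := by
  induction c with
  | zero =>
    intro x hx
    have : x = 1 := hx
    subst this; simpa using one_mem_ball S 0
  | succ c ih =>
    intro x hx
    rcases hx with hx | hx
    · exact ball_subset_succ S c (ih hx)
    · obtain ⟨b, hb, s, hs, rfl⟩ := hx
      have h1 : s⁻¹ * b⁻¹ ∈ ball S (1 + c) :=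
        mul_mem_ball (mem_ball_one (hsymm s hs)) (ih hb)
      rw [Nat.add_comm] at h1
      simpa [mul_inv_rev] using h1

lemma exists_ball {S : Set G} (hsymm : ∀ s ∈ S, s⁻¹ ∈ S)
    (hgen : Subgroup.closure S = ⊤) (g : G) : ∃ c, g ∈ ball S c := by
  have hg : g ∈ Subgroup.closure S := by rw [hgen]; trivial
  induction hg using Subgroup.closure_induction with
  | mem s hs => exact ⟨1, mem_ball_one hs⟩
  | one => exact ⟨0, one_mem_ball S 0⟩
  | mul x y hx hy ihx ihy =>
    obtain ⟨c, hc⟩ := ihx; obtain ⟨d, hd⟩ := ihy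
    exact ⟨c + d, mul_mem_ball hc hd⟩
  | inv x hx ihx =>
    obtain ⟨c, hc⟩ := ihx
    exact ⟨c, inv_mem_ball hsymm hc⟩




variable {G : Type*} [Group G] {S : Set G} {hsymm : ∀ s ∈ S, s⁻¹ ∈ S}
  {hid : (1 : G) ∉ S}

lemma iso_adj (φ : cayleyGraph S hsymm hid ≃g cayleyGraph S hsymm hid)
    {x y : G} (h : x⁻¹ * y ∈ S) : (φ x)⁻¹ * φ y ∈ S := by
  have : (cayleyGraph S hsymm hid).Adj (φ x) (φ y) :=
    φ.map_adj_iff.mpr h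
  exact this

lemma iso_ball (φ : cayleyGraph S hsymm hid ≃g cayleyGraph S hsymm hid) :
    ∀ {c : ℕ} {x y : G}, x⁻¹ * y ∈ ball S c → (φ x)⁻¹ * φ y ∈ ball S c := by
  intro c
  induction c with
  | zero =>
    intro x y h
    have hxy : x = y := inv_mul_eq_one.mp h
    subst hxy
    simpa using one_mem_ball S 0
  | succ c ih =>
    intro x y h
    rcases h with h | h
    · exact ball_subset_succ S c (ih h)
    · obtain ⟨b, hb, s, hs, hbs⟩ := h
      have hbs' : b * s = x⁻¹ * y := hbs
      have hy : y = x * (b * s) := by rw [hbs']; group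
      subst hy
      have h1 : (φ x)⁻¹ * φ (x * b) ∈ ball S c := by
        apply ih
        simpa using hb
      have h2 : (φ (x * b))⁻¹ * φ (x * (b * s)) ∈ S := by
        apply iso_adj φ
        group
        simpa using hs
      have h3 : (φ x)⁻¹ * φ (x * (b * s)) =
          ((φ x)⁻¹ * φ (x * b)) * ((φ (x * b))⁻¹ * φ (x * (b * s))) := by group
      rw [h3]
      exact Or.inr ⟨_, h1, _, h2, rfl⟩


section OrderAux

variable {Q : Type*} (lt : Q → Q → Prop)

/-- Non-strict version of the order `lt`. -/
def Le (a b : Q) : Prop := a = b ∨ lt a b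

variable {lt}

lemma Le.refl {a : Q} : Le lt a a := Or.inl rfl

lemma Le.trans (htrans : ∀ x y z, lt x y → lt y z → lt x z) {a b c : Q}
    (h1 : Le lt a b) (h2 : Le lt b c) : Le lt a c := by
  rcases h1 with rfl | h1
  · exact h2
  · rcases h2 with rfl | h2
    · exact Or.inr h1
    · exact Or.inr (htrans _ _ _ h1 h2)

lemma Le.antisymm (hirr : ∀ x, ¬ lt x x) (htrans : ∀ x y z, lt x y → lt y z → lt x z)
    {a b : Q} (h1 : Le lt a b) (h2 : Le lt b a) : a = b := by
  rcases h1 with rfl | h1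
  · rfl
  · rcases h2 with rfl | h2
    · rfl
    · exact absurd (htrans _ _ _ h1 h2) (hirr a)

lemma exists_max_finset (htotal : ∀ x y : Q, x ≠ y → lt x y ∨ lt y x)
    (htrans : ∀ x y z, lt x y → lt y z → lt x z)
    (t : Finset Q) (hne : t.Nonempty) : ∃ M ∈ t, ∀ x ∈ t, Le lt x M := by
  classical
  induction t using Finset.induction_on with
  | empty => exact absurd hne (by simp)
  | @insert a s ha ih =>
    rcases s.eq_empty_or_nonempty with rfl | hs
    · refine ⟨a, by simp, ?_⟩
      intro x hx
      simp only [Finset.mem_insert, Finset.notMem_empty, or_false] at hx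
      exact hx ▸ Le.refl
    · obtain ⟨M, hM, hmax⟩ := ih hs
      by_cases haM : a = M
      · refine ⟨M, Finset.mem_insert_of_mem hM, ?_⟩
        intro x hx
        rcases Finset.mem_insert.mp hx with rfl | hx
        · exact Or.inl haM
        · exact hmax x hx
      · rcases htotal a M haM with h | h
        · refine ⟨M, Finset.mem_insert_of_mem hM, ?_⟩
          intro x hx
          rcases Finset.mem_insert.mp hx with rfl | hx
          · exact Or.inr h
          · exact hmax x hx
        · refine ⟨a, Finset.mem_insert_self a s, ?_⟩
          intro x hx
          rcases Finset.mem_insert.mp hx with rfl | hx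
          · exact Le.refl
          · exact (hmax x hx).trans htrans (Or.inr h)

end OrderAux

section OrderGroupAux

variable {Q : Type*} [Group Q] {lt : Q → Q → Prop}

lemma Le.mul_compat (hinv : ∀ a b x y, lt x y → lt (a * x * b) (a * y * b))
    (c d : Q) {a b : Q} (h : Le lt a b) : Le lt (c * a * d) (c * b * d) := by
  rcases h with rfl | h
  · exact Le.refl
  · exact Or.inr (hinv c d a b h)

lemma lt_one_inv (hinv : ∀ a b x y, lt x y → lt (a * x * b) (a * y * b))
    {a : Q} (h : lt a 1) : lt 1 a⁻¹ := by
  have := hinv a⁻¹ 1 a 1 h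
  simpa using this

lemma lt_one_pow (hinv : ∀ a b x y, lt x y → lt (a * x * b) (a * y * b))
    (htrans : ∀ x y z, lt x y → lt y z → lt x z)
    {M : Q} (hM : lt 1 M) : ∀ p : ℕ, 1 ≤ p → lt 1 (M ^ p) := by
  intro p hp
  induction p with
  | zero => omega
  | succ p ih =>
    rcases Nat.eq_or_lt_of_le hp with h1 | h1
    · rw [← h1, pow_one]; exact hM
    · have hp' : 1 ≤ p := by omega
      have h2 : lt 1 (M ^ p) := ih hp'
      have h3 : lt (M ^ p) (M ^ p * M) := by
        have := hinv (M ^ p) 1 1 M hM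
        simpa using this
      rw [pow_succ]
      exact htrans _ _ _ h2 h3

end OrderGroupAux

section Pigeon

lemma pigeon {G : Type*} {f : ℕ → G} {T : Set G} (hT : T.Finite)
    (hf : ∀ n, f n ∈ T) : ∃ a b, a < b ∧ f a = f b := by
  have hni : ¬ Function.Injective f := by
    intro hinj
    exact (Set.infinite_range_of_injective hinj)
      (hT.subset (by rintro _ ⟨n, rfl⟩; exact hf n))
  obtain ⟨a, b, heq, hne⟩ := Function.not_injective_iff.mp hni
  rcases (Ne.lt_or_gt hne) with h | h
  · exact ⟨a, b, h, heq⟩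
  · exact ⟨b, a, h, heq.symm⟩

end Pigeon


theorem key_lemma
    {G : Type*} [Group G]
    (S : Set G) (hfin : S.Finite)
    (hsymm : ∀ s ∈ S, s⁻¹ ∈ S) (hid : (1 : G) ∉ S)
    (hgen : Subgroup.closure S = ⊤)
    (N : Subgroup G) [hNn : N.Normal] (hNfin : (N : Set G).Finite)
    (lt : G ⧸ N → G ⧸ N → Prop)
    (hirr : ∀ x, ¬ lt x x)
    (htrans : ∀ x y z, lt x y → lt y z → lt x z)
    (htotal : ∀ x y, x ≠ y → lt x y ∨ lt y x)
    (hinv : ∀ a b x y, lt x y → lt (a * x * b) (a * y * b))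
    (φ : cayleyGraph S hsymm hid ≃g cayleyGraph S hsymm hid) :
    ∀ g n : G, n ∈ N → (φ g)⁻¹ * φ (g * n) ∈ N := by
  classical
  have hballall : ∀ g : G, ∃ c, g ∈ ball S c := exists_ball hsymm hgen
  choose rad hrad using hballall
  obtain ⟨C, hC⟩ : ∃ C : ℕ, ∀ n ∈ (N : Set G), n ∈ ball S C := by
    have himg : (rad '' (N : Set G)).Finite := hNfin.image rad
    obtain ⟨C, hC⟩ := himg.bddAbove
    exact ⟨C, fun n hn => ball_mono S (hC (Set.mem_image_of_mem rad hn)) (hrad n)⟩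
  have hdisp : ∀ g n : G, n ∈ N → (φ g)⁻¹ * φ (g * n) ∈ ball S C := by
    intro g n hn
    apply iso_ball φ
    have h1 : g⁻¹ * (g * n) = n := by group
    rw [h1]; exact hC n hn
  set A : Set (G ⧸ N) :=
    {q | ∃ g n, n ∈ N ∧ q = QuotientGroup.mk ((φ g)⁻¹ * φ (g * n))} with hA
  have hAfin : A.Finite := by
    apply ((ball_finite hfin C).image (QuotientGroup.mk : G → G ⧸ N)).subset
    rintro q ⟨g, n, hn, rfl⟩
    exact Set.mem_image_of_mem _ (hdisp g n hn)
  have hAinv : ∀ q ∈ A, q⁻¹ ∈ A := by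
    rintro q ⟨g, n, hn, rfl⟩
    refine ⟨g * n, n⁻¹, N.inv_mem hn, ?_⟩
    rw [← QuotientGroup.mk_inv]
    congr 1
    have h1 : g * n * n⁻¹ = g := by group
    rw [h1]
    group
  have main : ∀ q ∈ A, q = 1 := by
    by_contra hcon
    push_neg at hcon
    obtain ⟨q0, hq0A, hq0⟩ := hcon
    obtain ⟨M, hMA, hMmax'⟩ :=
      exists_max_finset htotal htrans hAfin.toFinset
        ⟨q0, hAfin.mem_toFinset.mpr hq0A⟩
    have hMA' : M ∈ A := hAfin.mem_toFinset.mp hMA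
    have hMmax : ∀ x ∈ A, Le lt x M := fun x hx =>
      hMmax' x (hAfin.mem_toFinset.mpr hx)
    have hM1 : lt 1 M := by
      rcases htotal q0 1 hq0 with h | h
      · have h2 : lt 1 q0⁻¹ := lt_one_inv hinv h
        rcases hMmax _ (hAinv q0 hq0A) with heq | hlt
        · rw [← heq]; exact h2
        · exact htrans _ _ _ h2 hlt
      · rcases hMmax q0 hq0A with heq | hlt
        · rw [← heq]; exact h
        · exact htrans _ _ _ h hlt
    obtain ⟨g₀, n₀, hn₀, hMeq⟩ := hMA'
    -- the one-step propagation claim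
    have step : ∀ g : G, QuotientGroup.mk ((φ g)⁻¹ * φ (g * n₀)) = M →
        QuotientGroup.mk ((φ (g * n₀))⁻¹ * φ (g * n₀ * n₀)) = M := by
      intro g hg
      have master : ∀ u : G,
          Le lt (QuotientGroup.mk ((φ (g * n₀))⁻¹ * φ (g * n₀ * u)))
            (M⁻¹ * QuotientGroup.mk ((φ g)⁻¹ * φ (g * u)) * M) := by
        intro u
        have hmem : QuotientGroup.mk ((φ (g * u))⁻¹ * φ (g * n₀ * u)) ∈ A := by
          refine ⟨g * u, u⁻¹ * n₀ * u, ?_, ?_⟩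
          · have h2 := hNn.conj_mem n₀ hn₀ u⁻¹
            simpa using h2
          · have harg : (g * u) * (u⁻¹ * n₀ * u) = g * n₀ * u := by group
            rw [harg]
        have hle := hMmax _ hmem
        have hideq : (QuotientGroup.mk ((φ (g * u))⁻¹ * φ (g * n₀ * u)) : G ⧸ N) =
            (QuotientGroup.mk ((φ g)⁻¹ * φ (g * u)))⁻¹ *
              QuotientGroup.mk ((φ g)⁻¹ * φ (g * n₀)) *
              QuotientGroup.mk ((φ (g * n₀))⁻¹ * φ (g * n₀ * u)) := by
          have e : (φ (g * u))⁻¹ * φ (g * n₀ * u) =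
              ((φ g)⁻¹ * φ (g * u))⁻¹ * ((φ g)⁻¹ * φ (g * n₀)) *
                ((φ (g * n₀))⁻¹ * φ (g * n₀ * u)) := by group
          rw [e, QuotientGroup.mk_mul, QuotientGroup.mk_mul, QuotientGroup.mk_inv]
        rw [hideq, hg] at hle
        have h3 := Le.mul_compat hinv
          (M⁻¹ * QuotientGroup.mk ((φ g)⁻¹ * φ (g * u))) 1 hle
        have e1 : (M⁻¹ * QuotientGroup.mk ((φ g)⁻¹ * φ (g * u))) *
            ((QuotientGroup.mk ((φ g)⁻¹ * φ (g * u)))⁻¹ * M *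
              QuotientGroup.mk ((φ (g * n₀))⁻¹ * φ (g * n₀ * u))) * 1 =
            QuotientGroup.mk ((φ (g * n₀))⁻¹ * φ (g * n₀ * u)) := by group
        have e2 : (M⁻¹ * QuotientGroup.mk ((φ g)⁻¹ * φ (g * u))) * M * 1 =
            M⁻¹ * QuotientGroup.mk ((φ g)⁻¹ * φ (g * u)) * M := by group
        rwa [e1, e2] at h3
      -- the auxiliary bijections
      set Vf : G → G → G := fun x u => (φ x)⁻¹ * φ (x * u) with hVf
      set Wf : G → G → G := fun x u => x⁻¹ * (φ.symm ((φ x) * u)) with hWf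
      have hVW : ∀ x u, Vf x (Wf x u) = u := by
        intro x u
        simp only [hVf, hWf]
        have h1 : x * (x⁻¹ * φ.symm (φ x * u)) = φ.symm (φ x * u) := by group
        rw [h1, φ.apply_symm_apply]
        group
      have hWV : ∀ x u, Wf x (Vf x u) = u := by
        intro x u
        simp only [hVf, hWf]
        have h1 : φ x * ((φ x)⁻¹ * φ (x * u)) = φ (x * u) := by group
        rw [h1, φ.symm_apply_apply]
        group
      have hVball : ∀ x u (c : ℕ), u ∈ ball S c → Vf x u ∈ ball S c := by
        intro x u c hu
        apply iso_ball φ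
        have h1 : x⁻¹ * (x * u) = u := by group
        rw [h1]; exact hu
      have hWball : ∀ x u (c : ℕ), u ∈ ball S c → Wf x u ∈ ball S c := by
        intro x u c hu
        have h1 : (φ.symm (φ x))⁻¹ * φ.symm ((φ x) * u) ∈ ball S c := by
          apply iso_ball φ.symm
          have h2 : (φ x)⁻¹ * ((φ x) * u) = u := by group
          rw [h2]; exact hu
        rw [φ.symm_apply_apply] at h1
        exact h1
      set stepf : G → G := fun u => Wf g (Vf (g * n₀) u) with hstepf
      have hstepinj : Function.Injective stepf := by
        have hli : Function.LeftInverse (fun u => Wf (g * n₀) (Vf g u)) stepf := by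
          intro u
          simp only [hstepf]
          rw [hVW, hWV]
        exact hli.injective
      set w : ℕ → G := fun j => stepf^[j] n₀ with hw
      have hw0 : w 0 = n₀ := rfl
      have hwsucc : ∀ j, w (j + 1) = Wf g (Vf (g * n₀) (w j)) := by
        intro j
        simp only [hw, Function.iterate_succ_apply']
        rfl
      have hwball : ∀ j, w j ∈ ball S C := by
        intro j
        induction j with
        | zero => exact hC n₀ hn₀
        | succ j ih => rw [hwsucc]; exact hWball _ _ _ (hVball _ _ _ ih)
      set z : ℕ → G ⧸ N := fun j => QuotientGroup.mk ((φ g)⁻¹ * φ (g * w j)) with hz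
      have hz0 : z 0 = M := hg
      have hzsucc : ∀ j,
          z (j + 1) = QuotientGroup.mk ((φ (g * n₀))⁻¹ * φ (g * n₀ * (w j))) := by
        intro j
        simp only [hz]
        rw [hwsucc]
        have h1 : (φ g)⁻¹ * φ (g * Wf g (Vf (g * n₀) (w j))) =
            Vf g (Wf g (Vf (g * n₀) (w j))) := rfl
        rw [h1, hVW]
      have hzstep : ∀ j, Le lt (z (j + 1)) (M⁻¹ * z j * M) := by
        intro j
        rw [hzsucc j]
        exact master (w j)
      obtain ⟨a, b, hab, heqw⟩ := pigeon (ball_finite hfin C) hwball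
      obtain ⟨m, hm1, hwm⟩ : ∃ m, 1 ≤ m ∧ w m = w 0 := by
        refine ⟨b - a, by omega, ?_⟩
        have hb : b = a + (b - a) := by omega
        rw [hb] at heqw
        have h2 : stepf^[a] (w 0) = stepf^[a] (w (b - a)) := by
          have h3 : w (a + (b - a)) = stepf^[a] (w (b - a)) :=
            Function.iterate_add_apply stepf a (b - a) n₀
          rw [h3] at heqw
          exact heqw
        exact ((hstepinj.iterate a) h2).symm
      have hzm : z m = M := by
        show QuotientGroup.mk ((φ g)⁻¹ * φ (g * w m)) = M
        rw [hwm, hw0]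
        exact hg
      set Ach : ℕ → G ⧸ N := fun i => (M ^ i)⁻¹ * z (m - i) * M ^ i with hAch
      have hach0 : Ach 0 = M := by
        simp only [hAch, pow_zero, Nat.sub_zero, hzm]
        group
      have hachm : Ach m = M := by
        simp only [hAch, Nat.sub_self, hz0]
        group
      have hachstep : ∀ i, i < m → Le lt (Ach i) (Ach (i + 1)) := by
        intro i hi
        have h1 : m - i = (m - (i + 1)) + 1 := by omega
        have h2 := hzstep (m - (i + 1))
        rw [← h1] at h2
        have h3 := Le.mul_compat hinv ((M ^ i)⁻¹) (M ^ i) h2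
        have e1 : (M ^ i)⁻¹ * (M⁻¹ * z (m - (i + 1)) * M) * M ^ i =
            (M ^ (i + 1))⁻¹ * z (m - (i + 1)) * M ^ (i + 1) := by
          rw [pow_succ]; group
        rw [e1] at h3
        exact h3
      have hup : ∀ i, i ≤ m → Le lt M (Ach i) := by
        intro i
        induction i with
        | zero => intro _; rw [hach0]; exact Le.refl
        | succ i ih =>
          intro h
          exact (ih (by omega)).trans htrans (hachstep i (by omega))
      have hdn : ∀ k i, i + k = m → Le lt (Ach i) M := by
        intro k
        induction k with
        | zero =>
          intro i h
          have h1 : i = m := by omega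
          rw [h1, hachm]; exact Le.refl
        | succ k ih =>
          intro i h
          exact (hachstep i (by omega)).trans htrans (ih (i + 1) (by omega))
      have hach_eq : Ach (m - 1) = M :=
        Le.antisymm hirr htrans (hdn 1 (m - 1) (by omega)) (hup (m - 1) (by omega))
      have h5 : (M ^ (m - 1))⁻¹ * z 1 * M ^ (m - 1) = M := by
        have h6 := hach_eq
        simp only [hAch] at h6
        rw [show m - (m - 1) = 1 by omega] at h6
        exact h6
      have hz1 : z 1 = M := by
        have h7 : z 1 =
            M ^ (m - 1) * ((M ^ (m - 1))⁻¹ * z 1 * M ^ (m - 1)) * (M ^ (m - 1))⁻¹ := by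
          group
        rw [h5] at h7
        rw [h7]
        group
      have hz1' : z 1 = QuotientGroup.mk ((φ (g * n₀))⁻¹ * φ (g * n₀ * n₀)) := by
        rw [hzsucc 0, hw0]
      rw [← hz1']
      exact hz1
    -- iterate the one-step claim
    have all : ∀ i : ℕ,
        QuotientGroup.mk ((φ (g₀ * n₀ ^ i))⁻¹ * φ (g₀ * n₀ ^ i * n₀)) = M := by
      intro i
      induction i with
      | zero => simpa using hMeq.symm
      | succ i ih =>
        have h1 := step (g₀ * n₀ ^ i) ih
        have h2 : g₀ * n₀ ^ i * n₀ = g₀ * n₀ ^ (i + 1) := by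
          rw [pow_succ, mul_assoc]
        rw [h2] at h1
        exact h1
    -- telescope
    have tel : ∀ p : ℕ,
        QuotientGroup.mk ((φ g₀)⁻¹ * φ (g₀ * n₀ ^ p)) = M ^ p := by
      intro p
      induction p with
      | zero => simp
      | succ p ih =>
        have e : (φ g₀)⁻¹ * φ (g₀ * n₀ ^ (p + 1)) =
            ((φ g₀)⁻¹ * φ (g₀ * n₀ ^ p)) *
              ((φ (g₀ * n₀ ^ p))⁻¹ * φ (g₀ * n₀ ^ p * n₀)) := by
          have h2 : g₀ * n₀ ^ (p + 1) = g₀ * n₀ ^ p * n₀ := by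
            rw [pow_succ, mul_assoc]
          rw [h2]
          group
        rw [e, QuotientGroup.mk_mul, ih, all p, pow_succ]
    -- finite order of n₀
    obtain ⟨a, b, hab, hpow⟩ :=
      pigeon hNfin (fun k : ℕ => (N.pow_mem hn₀ k : n₀ ^ k ∈ (N : Set G)))
    obtain ⟨p, hp1, hpeq⟩ : ∃ p, 1 ≤ p ∧ n₀ ^ p = 1 := by
      refine ⟨b - a, by omega, ?_⟩
      have hb : b = a + (b - a) := by omega
      rw [hb, pow_add] at hpow
      have h2 : n₀ ^ a * 1 = n₀ ^ a * n₀ ^ (b - a) := by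
        rw [mul_one]; exact hpow
      exact (mul_left_cancel h2).symm
    have hMp : M ^ p = 1 := by
      rw [← tel p, hpeq]
      simp
    have hlast := lt_one_pow hinv htrans hM1 p hp1
    rw [hMp] at hlast
    exact hirr 1 hlast
  intro g n hn
  have h := main (QuotientGroup.mk ((φ g)⁻¹ * φ (g * n))) ⟨g, n, hn, rfl⟩
  exact (QuotientGroup.eq_one_iff _).mp h


/-- Transport of quotient-adjacency under an automorphism satisfying the key lemma. -/
lemma fwd_adj
    {G : Type*} [Group G] {S : Set G}
    {hsymm : ∀ s ∈ S, s⁻¹ ∈ S} {hid : (1 : G) ∉ S}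
    (N : Subgroup G) [N.Normal]
    (ψ0 : cayleyGraph S hsymm hid ≃g cayleyGraph S hsymm hid)
    (hk : ∀ g n : G, n ∈ N → (ψ0 g)⁻¹ * ψ0 (g * n) ∈ N)
    (g h : G)
    (hx : (QuotientGroup.mk g : G ⧸ N)⁻¹ * QuotientGroup.mk h ∈
      (QuotientGroup.mk : G → G ⧸ N) '' S) :
    (QuotientGroup.mk (ψ0 g) : G ⧸ N)⁻¹ * QuotientGroup.mk (ψ0 h) ∈
      (QuotientGroup.mk : G → G ⧸ N) '' S := by
  obtain ⟨s, hs, hmk⟩ := hx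
  have hmk2 : (QuotientGroup.mk s : G ⧸ N) = QuotientGroup.mk (g⁻¹ * h) := by
    rw [hmk, QuotientGroup.mk_mul, QuotientGroup.mk_inv]
  have hν : s⁻¹ * (g⁻¹ * h) ∈ N := QuotientGroup.eq.mp hmk2
  have hh : h = g * s * (s⁻¹ * (g⁻¹ * h)) := by group
  have hs' : (ψ0 g)⁻¹ * ψ0 (g * s) ∈ S := by
    apply iso_adj ψ0
    have h1 : g⁻¹ * (g * s) = s := by group
    rw [h1]; exact hs
  refine ⟨(ψ0 g)⁻¹ * ψ0 (g * s), hs', ?_⟩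
  have e2 : (QuotientGroup.mk (ψ0 g) : G ⧸ N)⁻¹ *
      QuotientGroup.mk (ψ0 (g * s * (s⁻¹ * (g⁻¹ * h)))) =
      QuotientGroup.mk ((ψ0 g)⁻¹ * ψ0 (g * s * (s⁻¹ * (g⁻¹ * h)))) := by
    rw [QuotientGroup.mk_mul, QuotientGroup.mk_inv]
  rw [hh, e2]
  apply QuotientGroup.eq.mpr
  have e3 : ((ψ0 g)⁻¹ * ψ0 (g * s))⁻¹ *
      ((ψ0 g)⁻¹ * ψ0 (g * s * (s⁻¹ * (g⁻¹ * h)))) =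
      (ψ0 (g * s))⁻¹ * ψ0 (g * s * (s⁻¹ * (g⁻¹ * h))) := by group
  rw [e3]
  exact hk (g * s) (s⁻¹ * (g⁻¹ * h)) hν

end CayleyDescendAux

/-- **Proposition 4.1.** If `N` is a finite normal subgroup of `G` such that
`G/N` is bi-orderable, then every automorphism `φ` of `Cay(G;S)` induces a
well-defined automorphism of `Cay(G/N; S̄)`, where `S̄` is the image of `S` in
`G/N`. -/
theorem cayley_aut_descends_to_quotient
    {G : Type*} [Group G]
    (S : Set G) (hfin : S.Finite)
    (hsymm : ∀ s ∈ S, s⁻¹ ∈ S) (hid : (1 : G) ∉ S)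
    (hgen : Subgroup.closure S = ⊤)
    (N : Subgroup G) [N.Normal] (hNfin : (N : Set G).Finite)
    -- `G/N` is bi-orderable: it has a strict total order invariant under
    -- left and right translations
    (lt : G ⧸ N → G ⧸ N → Prop)
    (hirr : ∀ x, ¬ lt x x)
    (htrans : ∀ x y z, lt x y → lt y z → lt x z)
    (htotal : ∀ x y, x ≠ y → lt x y ∨ lt y x)
    (hinv : ∀ a b x y, lt x y → lt (a * x * b) (a * y * b))
    (φ : cayleyGraph S hsymm hid ≃g cayleyGraph S hsymm hid) :
    -- `φ(gN) ⊆ φ(g)N`: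
    (∀ g : G, ∀ n ∈ N, ∃ m ∈ N, φ (g * n) = φ g * m) ∧
    -- and the induced map is an automorphism of `Cay(G/N; S̄)`:
    ∃ ψ : (G ⧸ N) ≃ (G ⧸ N),
      (∀ g : G, ψ (QuotientGroup.mk g) = QuotientGroup.mk (φ g)) ∧
      ∀ x y : G ⧸ N,
        (x⁻¹ * y ∈ QuotientGroup.mk '' S ↔
          (ψ x)⁻¹ * ψ y ∈ QuotientGroup.mk '' S) := by
  classical
  have hkey := CayleyDescendAux.key_lemma S hfin hsymm hid hgen N hNfin lt
    hirr htrans htotal hinv φ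
  have hkey' := CayleyDescendAux.key_lemma S hfin hsymm hid hgen N hNfin lt
    hirr htrans htotal hinv φ.symm
  constructor
  · intro g n hn
    refine ⟨(φ g)⁻¹ * φ (g * n), hkey g n hn, by group⟩
  · -- construct ψ
    have hresp : ∀ (ψ0 : cayleyGraph S hsymm hid ≃g cayleyGraph S hsymm hid),
        (∀ g n : G, n ∈ N → (ψ0 g)⁻¹ * ψ0 (g * n) ∈ N) →
        ∀ a b : G, @Setoid.r G (QuotientGroup.leftRel N) a b →
          @Setoid.r G (QuotientGroup.leftRel N) (ψ0 a) (ψ0 b) := by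
      intro ψ0 hk a b hab
      rw [QuotientGroup.leftRel_apply] at hab ⊢
      have h1 := hk a (a⁻¹ * b) hab
      have h2 : a * (a⁻¹ * b) = b := by group
      rwa [h2] at h1
    let F : G ⧸ N → G ⧸ N :=
      Quotient.map' (fun x => φ x) (hresp φ hkey)
    let Finv : G ⧸ N → G ⧸ N :=
      Quotient.map' (fun x => φ.symm x) (hresp φ.symm hkey')
    have hF : ∀ g : G, F (QuotientGroup.mk g) = QuotientGroup.mk (φ g) :=
      fun g => rfl
    have hFinv : ∀ g : G, Finv (QuotientGroup.mk g) = QuotientGroup.mk (φ.symm g) :=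
      fun g => rfl
    have hleft : Function.LeftInverse Finv F := by
      intro x
      obtain ⟨g, rfl⟩ := QuotientGroup.mk_surjective x
      rw [hF, hFinv, φ.symm_apply_apply]
    have hright : Function.RightInverse Finv F := by
      intro x
      obtain ⟨g, rfl⟩ := QuotientGroup.mk_surjective x
      rw [hFinv, hF, φ.apply_symm_apply]
    refine ⟨⟨F, Finv, hleft, hright⟩, fun g => hF g, ?_⟩
    intro x y
    obtain ⟨g, rfl⟩ := QuotientGroup.mk_surjective x
    obtain ⟨h, rfl⟩ := QuotientGroup.mk_surjective y
    show (QuotientGroup.mk g : G ⧸ N)⁻¹ * QuotientGroup.mk h ∈ _ ↔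
      (F (QuotientGroup.mk g))⁻¹ * F (QuotientGroup.mk h) ∈ _
    rw [hF g, hF h]
    constructor
    · intro hx
      exact CayleyDescendAux.fwd_adj N φ hkey g h hx
    · intro hx
      have h1 := CayleyDescendAux.fwd_adj N φ.symm hkey' (φ g) (φ h) hx
      rw [φ.symm_apply_apply, φ.symm_apply_apply] at h1
      exact h1
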